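/- Let m, k, p be natural numbers, let L_a : ℝ → ℝ (a = 1, …, k) and C_α : ℝ → ℝ (α = 1, …, p) be smooth functions, let n¹, …, nᵏ ∈ ℝᵐ and η¹, …, ηᵖ ∈ ℝᵐ, and let c_α ∈ ℝ be constants. Then there exists a smooth function E₀ : ℝᵐ × ℝᵐ → ℝ such that for all q, v, w ∈ ℝᵐ: Σ_{j=1}^{m} [ Σ_{i=1}^{m} Σ_{a=1}^{k} n^a_j n^a_i L_a(⟨n^a, v⟩) w^i + Σ_{α=1}^{p} η^α_j C_α(⟨η^α, q⟩ + c_α) ] v^j = Σ_{j=1}^{m} (∂E₀/∂q^j)(q,v) v^j + Σ_{j=1}^{m} (∂E₀/∂v^j)(q,v) w^j. Consequently, if additionally R_Γ : ℝ → ℝ (Γ = 1, …, r) are smooth and N¹, …, Nʳ ∈ ℝᵐ, then the Birkhoffian components Q_j(q,v,w) = Σ_i Σ_a n^a_j n^a_i L_a(⟨n^a, v⟩) w^i + Σ_Γ N^Γ_j R_Γ(⟨N^Γ, v⟩) + Σ_α η^α_j C_α(⟨η^α, q⟩ + c_α) satisfy, for all q, v, w ∈ ℝᵐ: Σ_j Q_j(q,v,w)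 v^j = Σ_j (∂E₀/∂q^j)(q,v) v^j + Σ_j (∂E₀/∂v^j)(q,v) w^j + Σ_Γ R_Γ(⟨N^Γ, v⟩)·⟨N^Γ, v⟩. -/

import Mathlib

noncomputable def antideriv (f : ℝ → ℝ) (x : ℝ) : ℝ := ∫ t in (0:ℝ)..x, f t

lemma antideriv_hasDerivAt {f : ℝ → ℝ} (hf : Continuous f) (x : ℝ) :
    HasDerivAt (antideriv f) (f x) x :=
  intervalIntegral.integral_hasDerivAt_right (hf.intervalIntegrable _ _)
    (hf.stronglyMeasurableAtFilter _ _) hf.continuousAt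

lemma antideriv_contDiff {f : ℝ → ℝ} (hf : ContDiff ℝ (⊤ : ℕ∞) f) :
    ContDiff ℝ (⊤ : ℕ∞) (antideriv f) := by
  rw [contDiff_infty_iff_deriv]
  refine ⟨fun x => (antideriv_hasDerivAt hf.continuous x).differentiableAt, ?_⟩
  have h : deriv (antideriv f) = f := funext fun x => (antideriv_hasDerivAt hf.continuous x).deriv
  rw [h]; exact hf

noncomputable def ip (m : ℕ) (u : Fin m → ℝ) : (Fin m → ℝ) →L[ℝ] ℝ :=
  ∑ s, u s • (ContinuousLinearMap.proj s : (Fin m → ℝ) →L[ℝ] ℝ)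

lemma ip_apply (m : ℕ) (u v : Fin m → ℝ) : ip m u v = ∑ s, u s * v s := by
  simp [ip, ContinuousLinearMap.sum_apply]

lemma ip_single (m : ℕ) (u : Fin m → ℝ) (j : Fin m) : ip m u (Pi.single j 1) = u j := by
  simp [ip_apply, Pi.single_apply, mul_ite]

lemma key_sum (m k p : ℕ) (n : Fin k → Fin m → ℝ) (η : Fin p → Fin m → ℝ)
    (Lv : Fin k → ℝ) (Cv : Fin p → ℝ) (v w : Fin m → ℝ) :
    ∑ j, ((∑ i, (∑ a, n a j * n a i * Lv a) * w i) + ∑ α, η α j * Cv α) * v j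
    = ∑ j, (∑ α, Cv α * η α j) * v j
      + ∑ j, (∑ a, ((∑ s, n a s * v s) * Lv a) * n a j) * w j := by
  have hC : ∑ j, (∑ α, η α j * Cv α) * v j = ∑ j, (∑ α, Cv α * η α j) * v j := by
    refine Finset.sum_congr rfl fun j _ => ?_
    congr 1
    exact Finset.sum_congr rfl fun α _ => mul_comm _ _
  have hL : ∑ j, (∑ i, (∑ a, n a j * n a i * Lv a) * w i) * v j
      = ∑ j, (∑ a, ((∑ s, n a s * v s) * Lv a) * n a j) * w j := by
    simp only [Finset.sum_mul]
    rw [Finset.sum_comm]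
    refine Finset.sum_congr rfl fun i _ => ?_
    rw [Finset.sum_comm]
    exact Finset.sum_congr rfl fun a _ => Finset.sum_congr rfl fun j _ => by ring
  calc ∑ j, ((∑ i, (∑ a, n a j * n a i * Lv a) * w i) + ∑ α, η α j * Cv α) * v j
      = (∑ j, (∑ i, (∑ a, n a j * n a i * Lv a) * w i) * v j)
        + ∑ j, (∑ α, η α j * Cv α) * v j := by
        simp [add_mul, Finset.sum_add_distrib]
    _ = _ := by rw [hL, hC, add_comm]

lemma res_sum (m r : ℕ) (N : Fin r → Fin m → ℝ) (Rv : Fin r → ℝ) (v : Fin m → ℝ) :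
    ∑ j, (∑ Γ, N Γ j * Rv Γ) * v j = ∑ Γ, Rv Γ * (∑ s, N Γ s * v s) := by
  simp only [Finset.sum_mul]
  rw [Finset.sum_comm]
  refine Finset.sum_congr rfl fun Γ _ => ?_
  rw [Finset.mul_sum]
  exact Finset.sum_congr rfl fun j _ => by ring

/-- Existence of a smooth energy function E₀ for the inductor/capacitor part of the
Birkhoffian of a nonlinear RLC network, and the resulting dissipativity identity for the
full Birkhoffian components Q_j. -/
theorem exists_energy_function_dissipative (m k p r : ℕ)
    (L : Fin k → ℝ → ℝ) (C : Fin p → ℝ → ℝ) (R : Fin r → ℝ → ℝ)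
    (hL : ∀ a, ContDiff ℝ (⊤ : ℕ∞) (L a)) (hC : ∀ α, ContDiff ℝ (⊤ : ℕ∞) (C α))
    (hR : ∀ Γ, ContDiff ℝ (⊤ : ℕ∞) (R Γ))
    (n : Fin k → Fin m → ℝ) (η : Fin p → Fin m → ℝ) (N : Fin r → Fin m → ℝ)
    (c : Fin p → ℝ) :
    ∃ E₀ : (Fin m → ℝ) × (Fin m → ℝ) → ℝ, ContDiff ℝ (⊤ : ℕ∞) E₀ ∧
      (∀ q v w : Fin m → ℝ,
        ∑ j, ((∑ i, (∑ a, n a j * n a i * L a (∑ s, n a s * v s)) * w i)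
              + ∑ α, η α j * C α ((∑ s, η α s * q s) + c α)) * v j
        = ∑ j, (fderiv ℝ E₀ (q, v) (Pi.single j 1, 0)) * v j
          + ∑ j, (fderiv ℝ E₀ (q, v) (0, Pi.single j 1)) * w j) ∧
      (∀ q v w : Fin m → ℝ,
        ∑ j, ((∑ i, (∑ a, n a j * n a i * L a (∑ s, n a s * v s)) * w i)
              + ∑ Γ, N Γ j * R Γ (∑ s, N Γ s * v s)
              + ∑ α, η α j * C α ((∑ s, η α s * q s) + c α)) * v j
        = ∑ j, (fderiv ℝ E₀ (q, v) (Pi.single j 1, 0)) * v j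
          + ∑ j, (fderiv ℝ E₀ (q, v) (0, Pi.single j 1)) * w j
          + ∑ Γ, R Γ (∑ s, N Γ s * v s) * (∑ s, N Γ s * v s)) := by
  set ℓv : Fin k → ((Fin m → ℝ) × (Fin m → ℝ)) →L[ℝ] ℝ :=
    fun a => (ip m (n a)).comp (ContinuousLinearMap.snd ℝ (Fin m → ℝ) (Fin m → ℝ)) with hℓv
  set ℓq : Fin p → ((Fin m → ℝ) × (Fin m → ℝ)) →L[ℝ] ℝ :=
    fun α => (ip m (η α)).comp (ContinuousLinearMap.fst ℝ (Fin m → ℝ) (Fin m → ℝ)) with hℓq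
  set F : Fin k → ℝ → ℝ := fun a => antideriv (fun x => x * L a x) with hF
  set G : Fin p → ℝ → ℝ := fun α => antideriv (C α) with hG
  set E₀ : (Fin m → ℝ) × (Fin m → ℝ) → ℝ :=
    fun x => (∑ a, F a (ℓv a x)) + ∑ α, G α (ℓq α x + c α) with hE
  have hfd : ∀ q v : Fin m → ℝ, fderiv ℝ E₀ (q, v)
      = (∑ a, ((ℓv a (q, v)) * L a (ℓv a (q, v))) • ℓv a)
        + ∑ α, (C α (ℓq α (q, v) + c α)) • ℓq α := by
    intro q v
    refine HasFDerivAt.fderiv ?_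
    refine HasFDerivAt.add (HasFDerivAt.fun_sum fun a _ => ?_) (HasFDerivAt.fun_sum fun α _ => ?_)
    · exact (antideriv_hasDerivAt (continuous_id.mul (hL a).continuous)
        (ℓv a (q, v))).comp_hasFDerivAt (q, v) (ℓv a).hasFDerivAt
    · exact (antideriv_hasDerivAt (hC α).continuous
        (ℓq α (q, v) + c α)).comp_hasFDerivAt (q, v) ((ℓq α).hasFDerivAt.add_const (c α))
  have hq : ∀ (q v : Fin m → ℝ) (j : Fin m), fderiv ℝ E₀ (q, v) (Pi.single j 1, 0)
      = ∑ α, C α ((∑ s, η α s * q s) + c α) * η α j := by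
    intro q v j
    rw [hfd]
    simp [hℓv, hℓq, ip_apply, Pi.single_apply, mul_ite, mul_zero, mul_one,
      Finset.sum_ite_eq']
  have hv : ∀ (q v : Fin m → ℝ) (j : Fin m), fderiv ℝ E₀ (q, v) (0, Pi.single j 1)
      = ∑ a, ((∑ s, n a s * v s) * L a (∑ s, n a s * v s)) * n a j := by
    intro q v j
    rw [hfd]
    simp [hℓv, hℓq, ip_apply, Pi.single_apply, mul_ite, mul_zero, mul_one,
      Finset.sum_ite_eq', mul_assoc]
  have main : ∀ q v w : Fin m → ℝ,
      ∑ j, ((∑ i, (∑ a, n a j * n a i * L a (∑ s, n a s * v s)) * w i)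
            + ∑ α, η α j * C α ((∑ s, η α s * q s) + c α)) * v j
      = ∑ j, (fderiv ℝ E₀ (q, v) (Pi.single j 1, 0)) * v j
        + ∑ j, (fderiv ℝ E₀ (q, v) (0, Pi.single j 1)) * w j := by
    intro q v w
    simp only [hq, hv]
    have := key_sum m k p n η (fun a => L a (∑ s, n a s * v s))
      (fun α => C α ((∑ s, η α s * q s) + c α)) v w
    convert this using 3 <;> ring
  refine ⟨E₀, ?_, main, ?_⟩
  · refine ContDiff.add (ContDiff.sum fun a _ => ?_) (ContDiff.sum fun α _ => ?_)
    · exact (antideriv_contDiff ((contDiff_id.mul (hL a)))).comp (ℓv a).contDiff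
    · exact (antideriv_contDiff (hC α)).comp ((ℓq α).contDiff.add contDiff_const)
  · intro q v w
    have h2 := res_sum m r N (fun Γ => R Γ (∑ s, N Γ s * v s)) v
    calc ∑ j, ((∑ i, (∑ a, n a j * n a i * L a (∑ s, n a s * v s)) * w i)
              + ∑ Γ, N Γ j * R Γ (∑ s, N Γ s * v s)
              + ∑ α, η α j * C α ((∑ s, η α s * q s) + c α)) * v j
        = (∑ j, ((∑ i, (∑ a, n a j * n a i * L a (∑ s, n a s * v s)) * w i)
              + ∑ α, η α j * C α ((∑ s, η α s * q s) + c α)) * v j)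
          + ∑ j, (∑ Γ, N Γ j * R Γ (∑ s, N Γ s * v s)) * v j := by
          rw [← Finset.sum_add_distrib]
          exact Finset.sum_congr rfl fun j _ => by ring
      _ = _ := by rw [main q v w, h2]
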